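/- Let 0 < q < 1, a < b, and f, g : [a,b] → ℝ with m ≤ f ≤ M and φ ≤ g ≤ Φ on [a,b]. Then |(1/(b−a))·R_q(fg;a,b) − (1/(b−a)²)·R_q(f;a,b)·R_q(g;a,b)| ≤ (1/4)(M−m)(Φ−φ). -/

import Mathlib

open scoped BigOperators
open Set

private lemma tsum_sqrt_mul_sqrt_le (u v : ℕ → ℝ) (hu : ∀ k, 0 ≤ u k) (hv : ∀ k, 0 ≤ v k)
    (hus : Summable u) (hvs : Summable v) :
    ∑' k, Real.sqrt (u k) * Real.sqrt (v k) ≤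
      Real.sqrt (∑' k, u k) * Real.sqrt (∑' k, v k) := by
  have hsum : Summable (fun k => Real.sqrt (u k) * Real.sqrt (v k)) := by
    apply Summable.of_nonneg_of_le
      (fun k => mul_nonneg (Real.sqrt_nonneg _) (Real.sqrt_nonneg _))
      (fun k => ?_) (hus.add hvs)
    nlinarith [Real.sq_sqrt (hu k), Real.sq_sqrt (hv k), sq_nonneg (Real.sqrt (u k) - Real.sqrt (v k))]
  apply Summable.tsum_le_of_sum_le hsum
  intro s
  refine (Real.sum_sqrt_mul_sqrt_le s hu hv).trans ?_
  exact mul_le_mul (Real.sqrt_le_sqrt (Summable.sum_le_tsum s (fun i _ => hu i) hus))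
    (Real.sqrt_le_sqrt (Summable.sum_le_tsum s (fun i _ => hv i) hvs)) (Real.sqrt_nonneg _)
    (Real.sqrt_nonneg _)

private lemma gruss_tsum (w F G : ℕ → ℝ) (m M φ Φ : ℝ)
    (hw : ∀ k, 0 ≤ w k) (hws : Summable w) (hw1 : ∑' k, w k = 1)
    (hF : ∀ k, m ≤ F k ∧ F k ≤ M) (hG : ∀ k, φ ≤ G k ∧ G k ≤ Φ) :
    |(∑' k, w k * (F k * G k)) - (∑' k, w k * F k) * (∑' k, w k * G k)| ≤
      (1 / 4) * (M - m) * (Φ - φ) := by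
  have bdd : ∀ (h : ℕ → ℝ) (C : ℝ), (∀ k, |h k| ≤ C) → Summable (fun k => w k * h k) := by
    intro h C hC
    apply Summable.of_abs
    apply Summable.of_nonneg_of_le (fun k => abs_nonneg _) (fun k => ?_) (hws.mul_right C)
    rw [abs_mul, abs_of_nonneg (hw k)]
    exact mul_le_mul_of_nonneg_left (hC k) (hw k)
  set BF := |m| + |M| with hBF
  set BG := |φ| + |Φ| with hBG
  have hFb : ∀ k, |F k| ≤ BF := fun k => abs_le.2
    ⟨by have := neg_abs_le m; have := (hF k).1; have := abs_nonneg M; linarith,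
     by have := le_abs_self M; have := (hF k).2; have := abs_nonneg m; linarith⟩
  have hGb : ∀ k, |G k| ≤ BG := fun k => abs_le.2
    ⟨by have := neg_abs_le φ; have := (hG k).1; have := abs_nonneg Φ; linarith,
     by have := le_abs_self Φ; have := (hG k).2; have := abs_nonneg φ; linarith⟩
  have hBF0 : 0 ≤ BF := le_trans (abs_nonneg _) (hFb 0)
  have hBG0 : 0 ≤ BG := le_trans (abs_nonneg _) (hGb 0)
  have sF : Summable (fun k => w k * F k) := bdd F BF hFb
  have sG : Summable (fun k => w k * G k) := bdd G BG hGb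
  have sFG : Summable (fun k => w k * (F k * G k)) := by
    refine bdd _ (BF * BG) (fun k => ?_)
    rw [abs_mul]
    exact mul_le_mul (hFb k) (hGb k) (abs_nonneg _) hBF0
  set Ef := ∑' k, w k * F k with hEf
  set Eg := ∑' k, w k * G k with hEg
  set c : ℕ → ℝ := fun k => F k - Ef with hc
  set d : ℕ → ℝ := fun k => G k - Eg with hd
  have hcb : ∀ k, |c k| ≤ BF + |Ef| := fun k =>
    (abs_sub (F k) Ef).trans (add_le_add (hFb k) le_rfl)
  have hdb : ∀ k, |d k| ≤ BG + |Eg| := fun k =>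
    (abs_sub (G k) Eg).trans (add_le_add (hGb k) le_rfl)
  have scd : Summable (fun k => w k * (c k * d k)) := by
    refine bdd _ ((BF + |Ef|) * (BG + |Eg|)) (fun k => ?_)
    rw [abs_mul]
    exact mul_le_mul (hcb k) (hdb k) (abs_nonneg _) (by positivity)
  have sc2 : Summable (fun k => w k * (c k) ^ 2) := by
    refine bdd _ ((BF + |Ef|) ^ 2) (fun k => ?_)
    rw [abs_pow]
    exact pow_le_pow_left₀ (abs_nonneg _) (hcb k) 2
  have sd2 : Summable (fun k => w k * (d k) ^ 2) := by
    refine bdd _ ((BG + |Eg|) ^ 2) (fun k => ?_)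
    rw [abs_pow]
    exact pow_le_pow_left₀ (abs_nonneg _) (hdb k) 2
  -- covariance identity
  have hcov : ∑' k, w k * (c k * d k)
      = (∑' k, w k * (F k * G k)) - Ef * Eg := by
    have hcd : (fun k => w k * (c k * d k)) =
        fun k => (w k * (F k * G k) + (Ef * Eg) * w k) - (Ef * (w k * G k) + Eg * (w k * F k)) := by
      funext k; simp only [hc, hd]; ring
    rw [hcd, Summable.tsum_sub (sFG.add (hws.mul_left _)) ((sG.mul_left _).add (sF.mul_left _)),
      Summable.tsum_add sFG (hws.mul_left _), Summable.tsum_add (sG.mul_left _) (sF.mul_left _),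
      tsum_mul_left, tsum_mul_left, tsum_mul_left, hw1, ← hEf, ← hEg]
    ring
  -- variance bounds
  have hvarF : ∑' k, w k * (c k) ^ 2 ≤ ((M - m) / 2) ^ 2 := by
    have sH : Summable (fun k => w k * ((M - F k) * (F k - m))) := by
      refine bdd _ ((|M| + BF) * (BF + |m|)) (fun k => ?_)
      rw [abs_mul]
      refine mul_le_mul ?_ ?_ (abs_nonneg _) (by positivity)
      · exact (abs_sub _ _).trans (by gcongr; exact hFb k)
      · exact (abs_sub _ _).trans (by gcongr; exact hFb k)
    have hid : (fun k => w k * (c k) ^ 2) =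
        fun k => ((Ef ^ 2 - M * m) * w k + (M + m - 2 * Ef) * (w k * F k))
          - w k * ((M - F k) * (F k - m)) := by
      funext k; simp only [hc]; ring
    have ht : 0 ≤ ∑' k, w k * ((M - F k) * (F k - m)) := by
      apply tsum_nonneg
      intro k
      exact mul_nonneg (hw k) (mul_nonneg (sub_nonneg.2 (hF k).2) (sub_nonneg.2 (hF k).1))
    rw [hid, Summable.tsum_sub ((hws.mul_left _).add (sF.mul_left _)) sH,
      Summable.tsum_add (hws.mul_left _) (sF.mul_left _), tsum_mul_left, tsum_mul_left, hw1, ← hEf]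
    nlinarith [sq_nonneg (M + m - 2 * Ef)]
  have hvarG : ∑' k, w k * (d k) ^ 2 ≤ ((Φ - φ) / 2) ^ 2 := by
    have sH : Summable (fun k => w k * ((Φ - G k) * (G k - φ))) := by
      refine bdd _ ((|Φ| + BG) * (BG + |φ|)) (fun k => ?_)
      rw [abs_mul]
      refine mul_le_mul ?_ ?_ (abs_nonneg _) (by positivity)
      · exact (abs_sub _ _).trans (by gcongr; exact hGb k)
      · exact (abs_sub _ _).trans (by gcongr; exact hGb k)
    have hid : (fun k => w k * (d k) ^ 2) =
        fun k => ((Eg ^ 2 - Φ * φ) * w k + (Φ + φ - 2 * Eg) * (w k * G k))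
          - w k * ((Φ - G k) * (G k - φ)) := by
      funext k; simp only [hd]; ring
    have ht : 0 ≤ ∑' k, w k * ((Φ - G k) * (G k - φ)) := by
      apply tsum_nonneg
      intro k
      exact mul_nonneg (hw k) (mul_nonneg (sub_nonneg.2 (hG k).2) (sub_nonneg.2 (hG k).1))
    rw [hid, Summable.tsum_sub ((hws.mul_left _).add (sG.mul_left _)) sH,
      Summable.tsum_add (hws.mul_left _) (sG.mul_left _), tsum_mul_left, tsum_mul_left, hw1, ← hEg]
    nlinarith [sq_nonneg (Φ + φ - 2 * Eg)]
  have hmM : m ≤ M := le_trans (hF 0).1 (hF 0).2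
  have hφΦ : φ ≤ Φ := le_trans (hG 0).1 (hG 0).2
  -- Cauchy–Schwarz
  have habs : ∀ k, |w k * (c k * d k)| =
      Real.sqrt (w k * (c k) ^ 2) * Real.sqrt (w k * (d k) ^ 2) := by
    intro k
    rw [← Real.sqrt_mul (mul_nonneg (hw k) (sq_nonneg _)), ← Real.sqrt_sq_eq_abs]
    congr 1; ring
  calc |(∑' k, w k * (F k * G k)) - Ef * Eg| = |∑' k, w k * (c k * d k)| := by rw [hcov]
    _ ≤ ∑' k, |w k * (c k * d k)| := by
        simpa only [Real.norm_eq_abs] using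
          norm_tsum_le_tsum_norm (f := fun k => w k * (c k * d k)) scd.abs
    _ = ∑' k, Real.sqrt (w k * (c k) ^ 2) * Real.sqrt (w k * (d k) ^ 2) := by
        exact tsum_congr habs
    _ ≤ Real.sqrt (∑' k, w k * (c k) ^ 2) * Real.sqrt (∑' k, w k * (d k) ^ 2) :=
        tsum_sqrt_mul_sqrt_le _ _ (fun k => mul_nonneg (hw k) (sq_nonneg _))
          (fun k => mul_nonneg (hw k) (sq_nonneg _)) sc2 sd2
    _ ≤ ((M - m) / 2) * ((Φ - φ) / 2) := by
        refine mul_le_mul ?_ ?_ (Real.sqrt_nonneg _) (by linarith)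
        · calc Real.sqrt (∑' k, w k * (c k) ^ 2) ≤ Real.sqrt (((M - m) / 2) ^ 2) :=
              Real.sqrt_le_sqrt hvarF
            _ = (M - m) / 2 := Real.sqrt_sq (by linarith)
        · calc Real.sqrt (∑' k, w k * (d k) ^ 2) ≤ Real.sqrt (((Φ - φ) / 2) ^ 2) :=
              Real.sqrt_le_sqrt hvarG
            _ = (Φ - φ) / 2 := Real.sqrt_sq (by linarith)
    _ = (1 / 4) * (M - m) * (Φ - φ) := by ring

/-- q-Grüss inequality for the Riemann-type q-integral. -/
theorem q_gruss_Rq (q a b m M φ Φ : ℝ) (f g : ℝ → ℝ)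
    (hq0 : 0 < q) (hq1 : q < 1) (hab : a < b)
    (hf : ∀ x ∈ Icc a b, m ≤ f x ∧ f x ≤ M)
    (hg : ∀ x ∈ Icc a b, φ ≤ g x ∧ g x ≤ Φ) :
    |(1 / (b - a)) *
          ((b - a) * (1 - q) * ∑' k : ℕ, f (a + (b - a) * q ^ k) * g (a + (b - a) * q ^ k) * q ^ k) -
        (1 / (b - a) ^ 2) *
          ((b - a) * (1 - q) * ∑' k : ℕ, f (a + (b - a) * q ^ k) * q ^ k) *
          ((b - a) * (1 - q) * ∑' k : ℕ, g (a + (b - a) * q ^ k) * q ^ k)| ≤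
      (1 / 4) * (M - m) * (Φ - φ) := by
  have hba : b - a ≠ 0 := sub_ne_zero.2 hab.ne'
  set x : ℕ → ℝ := fun k => a + (b - a) * q ^ k with hx
  have hmem : ∀ k, x k ∈ Icc a b := by
    intro k
    have h1 : 0 < q ^ k := pow_pos hq0 k
    have h2 : q ^ k ≤ 1 := pow_le_one₀ hq0.le hq1.le
    constructor
    · simp only [hx]; nlinarith
    · simp only [hx]; nlinarith
  set w : ℕ → ℝ := fun k => (1 - q) * q ^ k with hw
  set F : ℕ → ℝ := fun k => f (x k) with hF
  set G : ℕ → ℝ := fun k => g (x k) with hG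
  have hsg : Summable (fun k : ℕ => q ^ k) := summable_geometric_of_lt_one hq0.le hq1
  have hws : Summable w := hsg.mul_left _
  have hw0 : ∀ k, 0 ≤ w k := fun k => mul_nonneg (by linarith) (pow_pos hq0 k).le
  have hw1 : ∑' k, w k = 1 := by
    rw [hw]
    rw [tsum_mul_left, tsum_geometric_of_lt_one hq0.le hq1]
    exact mul_inv_cancel₀ (sub_ne_zero.2 hq1.ne')
  have key := gruss_tsum w F G m M φ Φ hw0 hws hw1
    (fun k => hf (x k) (hmem k)) (fun k => hg (x k) (hmem k))
  have e1 : ∑' k, w k * (F k * G k) = (1 - q) * ∑' k : ℕ, f (x k) * g (x k) * q ^ k := by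
    rw [← tsum_mul_left]; exact tsum_congr fun k => by simp only [hw, hF, hG]; ring
  have e2 : ∑' k, w k * F k = (1 - q) * ∑' k : ℕ, f (x k) * q ^ k := by
    rw [← tsum_mul_left]; exact tsum_congr fun k => by simp only [hw, hF]; ring
  have e3 : ∑' k, w k * G k = (1 - q) * ∑' k : ℕ, g (x k) * q ^ k := by
    rw [← tsum_mul_left]; exact tsum_congr fun k => by simp only [hw, hG]; ring
  have heq : (1 / (b - a)) *
        ((b - a) * (1 - q) * ∑' k : ℕ, f (x k) * g (x k) * q ^ k) -
      (1 / (b - a) ^ 2) *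
        ((b - a) * (1 - q) * ∑' k : ℕ, f (x k) * q ^ k) *
        ((b - a) * (1 - q) * ∑' k : ℕ, g (x k) * q ^ k)
      = (∑' k, w k * (F k * G k)) - (∑' k, w k * F k) * (∑' k, w k * G k) := by
    rw [e1, e2, e3]; field_simp
  rw [show (a + (b - a) * q ^ ·) = x from rfl] at *
  calc |(1 / (b - a)) *
        ((b - a) * (1 - q) * ∑' k : ℕ, f (x k) * g (x k) * q ^ k) -
      (1 / (b - a) ^ 2) *
        ((b - a) * (1 - q) * ∑' k : ℕ, f (x k) * q ^ k) *
        ((b - a) * (1 - q) * ∑' k : ℕ, g (x k) * q ^ k)|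
      = |(∑' k, w k * (F k * G k)) - (∑' k, w k * F k) * (∑' k, w k * G k)| := by rw [heq]
    _ ≤ (1 / 4) * (M - m) * (Φ - φ) := key
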